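/- Let G be a finite simple graph and let B be a set of cycles of G. Then B is a minimum cycle basis of G if and only if B is a cycle basis of G and for all cycles c1, c2 with c1 ∈ B, c2 ∉ B and λ_B(c1, c2) = 1, one has ω(c1) ≤ ω(c2). -/

import Mathlib

namespace MCBI

variable {V : Type*} [Fintype V] [DecidableEq V]

/-- A *cycle* of a simple graph `G`: a set of edges of `G` such that every vertex of `G`
is incident to an even number of them. -/
def IsCycle (G : SimpleGraph V) (c : Finset (Sym2 V)) : Prop :=
  (↑c : Set (Sym2 V)) ⊆ G.edgeSet ∧ ∀ v : V, Even (c.filter (fun e => v ∈ e)).card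

/-- The `⊕`-sum (GF(2)-sum, i.e. iterated symmetric difference) of a finite set of cycles:
an edge lies in the sum iff it lies in an odd number of the cycles. -/
def cycleSum (D : Finset (Finset (Sym2 V))) : Finset (Sym2 V) :=
  Finset.univ.filter fun e => Odd (D.filter (fun c => e ∈ c)).card

/-- Linear independence over `ℤ/2ℤ`: no nonempty subset sums to the empty cycle. -/
def LinIndep (B : Finset (Finset (Sym2 V))) : Prop :=
  ∀ D ⊆ B, D.Nonempty → cycleSum D ≠ ∅

/-- `B` spans every cycle of `G`. -/
def SpansCycles (G : SimpleGraph V) (B : Finset (Finset (Sym2 V))) : Prop :=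
  ∀ c : Finset (Sym2 V), IsCycle G c → ∃ D ⊆ B, cycleSum D = c

/-- A *cycle basis* of `G`: a linearly independent set of cycles spanning every cycle of `G`. -/
def IsCycleBasis (G : SimpleGraph V) (B : Finset (Finset (Sym2 V))) : Prop :=
  (∀ c ∈ B, IsCycle G c) ∧ LinIndep B ∧ SpansCycles G B

/-- `λ_B(c, d) = 1`: the cycle `c` belongs to a subset of `B` summing to `d`
(the unique such subset when `B` is a basis). -/
def lambdaEq1 (B : Finset (Finset (Sym2 V))) (c d : Finset (Sym2 V)) : Prop :=
  ∃ D ⊆ B, cycleSum D = d ∧ c ∈ D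

/-- Total weight of a set of cycles: the sum of the numbers of edges of its cycles. -/
def weight (B : Finset (Finset (Sym2 V))) : ℕ := ∑ c ∈ B, c.card

/-- A *minimum cycle basis*: a cycle basis of minimum total weight. -/
def IsMCB (G : SimpleGraph V) (B : Finset (Finset (Sym2 V))) : Prop :=
  IsCycleBasis G B ∧
    ∀ B' : Finset (Finset (Sym2 V)), IsCycleBasis G B' → weight B ≤ weight B'

/-- Membership in the `ℤ/2ℤ`-linear span of a set `S` of cycles. -/
def InSpan (S : Set (Finset (Sym2 V))) (c : Finset (Sym2 V)) : Prop :=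
  ∃ D : Finset (Finset (Sym2 V)), (↑D : Set (Finset (Sym2 V))) ⊆ S ∧ cycleSum D = c

/-- The vertices incident to the edges of a cycle. -/
def cycVerts (c : Finset (Sym2 V)) : Finset V :=
  Finset.univ.filter fun v => ∃ e ∈ c, v ∈ e

/-- A finite set of edges forms a connected subgraph: the graph consisting of these edges
together with their endpoints is connected. -/
def EdgesConnected (E : Finset (Sym2 V)) : Prop :=
  ((SimpleGraph.fromEdgeSet (↑E : Set (Sym2 V))).induce {v : V | ∃ e ∈ E, v ∈ e}).Connected

/-- An *elementary cycle*: a nonempty cycle whose edges form a connected subgraph in which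
every incident vertex has degree exactly `2`. -/
def IsElementaryCycle (G : SimpleGraph V) (c : Finset (Sym2 V)) : Prop :=
  IsCycle G c ∧ c.Nonempty ∧
    (∀ v : V, (∃ e ∈ c, v ∈ e) → (c.filter (fun e => v ∈ e)).card = 2) ∧
    EdgesConnected c

/-- The family of independent sets of the matroid `𝓜(G)`: the sets of cycles contained
in some minimum cycle basis of `G`. -/
def matroidIndep (G : SimpleGraph V) : Set (Finset (Finset (Sym2 V))) :=
  {D | ∃ B, IsMCB G B ∧ D ⊆ B}

/-- A set `B` of cycles of the intersection graph `G` is *feasible* for the instance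
`G₁, …, G_k` if for every `i` there is a minimum cycle basis of `Gᵢ` containing `B`. -/
def Feasible {k : ℕ} (Gs : Fin k → SimpleGraph V) (G : SimpleGraph V)
    (B : Finset (Finset (Sym2 V))) : Prop :=
  (∀ c ∈ B, IsCycle G c) ∧ ∀ i : Fin k, ∃ Bi, IsMCB (Gs i) Bi ∧ B ⊆ Bi



section Helpers

set_option linter.unusedSectionVars false

/-- indicator vector of a finset of edges -/
def chi (c : Finset (Sym2 V)) : Sym2 V → ZMod 2 := fun e => if e ∈ c then 1 else 0

lemma zmod2_cases (a : ZMod 2) : a = 0 ∨ a = 1 := by revert a; decide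

lemma chi_inj : Function.Injective (chi (V := V)) := by
  intro c d h
  ext e
  have := congrFun h e
  simp only [chi] at this
  by_cases hc : e ∈ c <;> by_cases hd : e ∈ d <;> simp_all

@[simp] lemma chi_empty : chi (∅ : Finset (Sym2 V)) = 0 := by
  funext e; simp [chi]

lemma add_self_w (w : Sym2 V → ZMod 2) : w + w = 0 := by
  funext e
  rcases zmod2_cases (w e) with h | h <;> simp [h]; decide

lemma natCast_zmod2 (n : ℕ) : (n : ZMod 2) = if Odd n then 1 else 0 := by
  have h := ZMod.natCast_mod n 2
  rcases Nat.mod_two_eq_zero_or_one n with h2 | h2 <;>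
    simp [← h, h2, Nat.odd_iff]

lemma chi_cycleSum (D : Finset (Finset (Sym2 V))) :
    chi (cycleSum D) = ∑ c ∈ D, chi c := by
  funext e
  have : (∑ c ∈ D, chi c) e = ∑ c ∈ D, (if e ∈ c then (1 : ZMod 2) else 0) := by
    simp [chi]
  rw [this, Finset.sum_boole, natCast_zmod2]
  simp [chi, cycleSum]

lemma sum_chi_eq_zero_iff (D : Finset (Finset (Sym2 V))) :
    ∑ c ∈ D, chi c = 0 ↔ cycleSum D = ∅ := by
  rw [← chi_cycleSum, ← chi_empty]
  exact ⟨fun h => chi_inj h, fun h => h ▸ rfl⟩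

lemma sum_chi_symmDiff (D E : Finset (Finset (Sym2 V))) :
    ∑ c ∈ symmDiff D E, chi c = (∑ c ∈ D, chi c) + ∑ c ∈ E, chi c := by
  classical
  have h1 : D ∪ E = symmDiff D E ∪ (D ∩ E) := by
    ext x; simp [Finset.mem_symmDiff, Finset.mem_union, Finset.mem_inter]; tauto
  have hdisj : Disjoint (symmDiff D E) (D ∩ E) := by
    rw [Finset.disjoint_left]
    intro a ha hmem
    simp [Finset.mem_symmDiff, Finset.mem_inter] at ha hmem
    tauto
  have h2 : (∑ c ∈ D ∪ E, chi c) = (∑ c ∈ symmDiff D E, chi c) + ∑ c ∈ D ∩ E, chi c := by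
    rw [h1, Finset.sum_union hdisj]
  have h3 : (∑ c ∈ D ∪ E, chi c) + ∑ c ∈ D ∩ E, chi c = (∑ c ∈ D, chi c) + ∑ c ∈ E, chi c :=
    Finset.sum_union_inter
  rw [h2] at h3
  have key : (∑ c ∈ symmDiff D E, chi c) + ((∑ c ∈ D ∩ E, chi c) + (∑ c ∈ D ∩ E, chi c))
      = (∑ c ∈ D, chi c) + ∑ c ∈ E, chi c := by rw [← add_assoc]; exact h3
  calc ∑ c ∈ symmDiff D E, chi c
      = (∑ c ∈ symmDiff D E, chi c) + ((∑ c ∈ D ∩ E, chi c) + (∑ c ∈ D ∩ E, chi c)) := by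
        rw [add_self_w]; ring
    _ = (∑ c ∈ D, chi c) + ∑ c ∈ E, chi c := key

lemma cycleSum_singleton (c : Finset (Sym2 V)) : cycleSum {c} = c := by
  apply chi_inj
  rw [chi_cycleSum, Finset.sum_singleton]

lemma linIndep_unique {B D E : Finset (Finset (Sym2 V))} (hB : LinIndep B)
    (hD : D ⊆ B) (hE : E ⊆ B) (h : cycleSum D = cycleSum E) : D = E := by
  classical
  by_contra hne
  have hsub : symmDiff D E ⊆ B := by
    intro x hx
    simp [Finset.mem_symmDiff] at hx
    rcases hx with ⟨h1, _⟩ | ⟨h1, _⟩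
    exacts [hD h1, hE h1]
  have hne' : (symmDiff D E).Nonempty := by
    rw [Finset.nonempty_iff_ne_empty]
    intro h0
    exact hne (by simpa [symmDiff_eq_bot] using h0)
  apply hB _ hsub hne'
  rw [← sum_chi_eq_zero_iff, sum_chi_symmDiff]
  have hchieq : chi (cycleSum D) = chi (cycleSum E) := by rw [h]
  rw [chi_cycleSum, chi_cycleSum] at hchieq
  rw [hchieq, add_self_w]

/-- the chi family on a subtype -/
def chiF (B : Finset (Finset (Sym2 V))) : {x // x ∈ B} → (Sym2 V → ZMod 2) :=
  fun i => chi i.1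

lemma linearIndependent_chiF {B : Finset (Finset (Sym2 V))} (hB : LinIndep B) :
    LinearIndependent (ZMod 2) (chiF B) := by
  classical
  rw [Fintype.linearIndependent_iff]
  intro g hg i
  set Dsub : Finset {x // x ∈ B} := Finset.univ.filter (fun j => g j = 1) with hDsub
  set D : Finset (Finset (Sym2 V)) := Dsub.image Subtype.val with hD
  have hDB : D ⊆ B := by
    intro x hx
    simp only [hD, Finset.mem_image] at hx
    obtain ⟨j, _, rfl⟩ := hx
    exact j.2
  have hsum : ∑ c ∈ D, chi c = ∑ j : {x // x ∈ B}, g j • chiF B j := by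
    rw [hD, Finset.sum_image (by intros a _ b _ h; exact Subtype.ext h)]
    rw [← Finset.sum_filter_add_sum_filter_not Finset.univ (fun j => g j = 1)]
    have h1 : ∀ j ∈ Dsub, chi j.1 = g j • chiF B j := by
      intro j hj
      simp only [hDsub, Finset.mem_filter] at hj
      rw [hj.2, one_smul]; rfl
    have h2 : ∑ j ∈ Finset.univ.filter (fun j => ¬ g j = 1), g j • chiF B j = 0 := by
      apply Finset.sum_eq_zero
      intro j hj
      simp only [Finset.mem_filter] at hj
      rcases zmod2_cases (g j) with h | h
      · rw [h, zero_smul]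
      · exact absurd h hj.2
    rw [h2, add_zero]
    exact Finset.sum_congr rfl h1
  have hzero : ∑ c ∈ D, chi c = 0 := by rw [hsum]; exact hg
  have hDempty : D = ∅ := by
    by_contra hne
    exact hB D hDB (Finset.nonempty_iff_ne_empty.mpr hne) ((sum_chi_eq_zero_iff D).mp hzero)
  rcases zmod2_cases (g i) with h | h
  · exact h
  · exfalso
    have : i.1 ∈ D := by
      rw [hD]
      exact Finset.mem_image_of_mem _ (by simp [hDsub, h])
    rw [hDempty] at this; exact absurd this (Finset.notMem_empty _)

lemma exists_perm_of_det_ne_zero {n : Type*} [Fintype n] [DecidableEq n]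
    {K : Type*} [CommRing K] (M : Matrix n n K) (h : M.det ≠ 0) :
    ∃ σ : Equiv.Perm n, ∀ i, M (σ i) i ≠ 0 := by
  by_contra hc
  push_neg at hc
  apply h
  rw [Matrix.det_apply]
  apply Finset.sum_eq_zero
  intro σ _
  obtain ⟨i, hi⟩ := hc σ
  rw [show (∏ j : n, M (σ j) j) = 0 from Finset.prod_eq_zero (Finset.mem_univ i) hi, smul_zero]

lemma repr_basisSpan {B : Finset (Finset (Sym2 V))} (hli : LinearIndependent (ZMod 2) (chiF B))
    {z : Submodule.span (ZMod 2) (Set.range (chiF B))} {D : Finset (Finset (Sym2 V))}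
    (hD : D ⊆ B) (hz : (z : Sym2 V → ZMod 2) = ∑ c ∈ D, chi c) (j : {x // x ∈ B}) :
    (Module.Basis.span hli).repr z j = if j.1 ∈ D then 1 else 0 := by
  classical
  set Dsub : Finset {x // x ∈ B} := Finset.univ.filter (fun i => i.1 ∈ D) with hDsub
  have hzeq : z = ∑ i ∈ Dsub, Module.Basis.span hli i := by
    apply Subtype.ext
    push_cast [AddSubmonoidClass.coe_finset_sum]
    rw [hz]
    have hco : ∀ i ∈ Dsub, ((Module.Basis.span hli i : Sym2 V → ZMod 2)) = chi i.1 :=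
      fun i _ => congrArg Subtype.val (Module.Basis.span_apply hli i)
    rw [Finset.sum_congr rfl hco]
    have himg : Dsub.image Subtype.val = D := by
      ext c
      simp only [Finset.mem_image, hDsub, Finset.mem_filter, Finset.mem_univ, true_and]
      constructor
      · rintro ⟨i, hi, rfl⟩; exact hi
      · intro hc; exact ⟨⟨c, hD hc⟩, hc, rfl⟩
    calc ∑ c ∈ D, chi c = ∑ c ∈ Dsub.image Subtype.val, chi c := by rw [himg]
      _ = ∑ i ∈ Dsub, chi i.1 := Finset.sum_image (fun a _ b _ h => Subtype.ext h)
  rw [hzeq, map_sum]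
  rw [Finsupp.finset_sum_apply]
  have hterm : ∀ i ∈ Dsub, ((Module.Basis.span hli).repr (Module.Basis.span hli i)) j
      = if i = j then 1 else 0 := by
    intro i _
    rw [Module.Basis.repr_self, Finsupp.single_apply]
  rw [Finset.sum_congr rfl hterm, Finset.sum_ite_eq' Dsub j (fun _ => (1 : ZMod 2))]
  simp [hDsub]

lemma mcb_forward {G : SimpleGraph V} {B : Finset (Finset (Sym2 V))} (hMCB : IsMCB G B) :
    ∀ c1 ∈ B, ∀ c2 : Finset (Sym2 V), IsCycle G c2 → c2 ∉ B →
      lambdaEq1 B c1 c2 → c1.card ≤ c2.card := by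
  classical
  intro c1 hc1B c2 hc2cyc hc2B hlam
  obtain ⟨D, hDB, hDsum, hc1D⟩ := hlam
  set B2 := insert c2 (B.erase c1) with hB2
  have hc2ne : c2 ∉ B.erase c1 := fun h => hc2B (Finset.mem_of_mem_erase h)
  have hchic2 : chi c2 = ∑ c ∈ D, chi c := by rw [← chi_cycleSum, hDsum]
  have hcyc2 : ∀ c ∈ B2, IsCycle G c := by
    intro c hc
    rcases Finset.mem_insert.mp hc with rfl | hc
    · exact hc2cyc
    · exact hMCB.1.1 c (Finset.mem_of_mem_erase hc)
  have hli2 : LinIndep B2 := by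
    intro E hE hEne h0
    by_cases hc2E : c2 ∈ E
    · set E' := E.erase c2 with hE'
      have hE'B : E' ⊆ B.erase c1 := by
        intro x hx
        have hx1 := Finset.mem_of_mem_erase hx
        have hx2 := Finset.ne_of_mem_erase hx
        rcases Finset.mem_insert.mp (hE hx1) with h | h
        · exact absurd h hx2
        · exact h
      have hsplit : chi c2 + ∑ c ∈ E', chi c = ∑ c ∈ E, chi c :=
        Finset.add_sum_erase E chi hc2E
      have h0' : ∑ c ∈ E, chi c = 0 := (sum_chi_eq_zero_iff E).mpr h0
      have hkey : ∑ c ∈ symmDiff D E', chi c = 0 := by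
        rw [sum_chi_symmDiff, ← hchic2, hsplit, h0']
      have hsub : symmDiff D E' ⊆ B := by
        intro x hx
        rcases Finset.mem_symmDiff.mp hx with ⟨h1, _⟩ | ⟨h1, _⟩
        exacts [hDB h1, Finset.mem_of_mem_erase (hE'B h1)]
      have hc1nE' : c1 ∉ E' := fun h => (Finset.notMem_erase c1 B) (hE'B h)
      have hne : (symmDiff D E').Nonempty :=
        ⟨c1, Finset.mem_symmDiff.mpr (Or.inl ⟨hc1D, hc1nE'⟩)⟩
      exact hMCB.1.2.1 _ hsub hne ((sum_chi_eq_zero_iff _).mp hkey)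
    · have hEB : E ⊆ B := by
        intro x hx
        rcases Finset.mem_insert.mp (hE hx) with h | h
        · exact absurd (h ▸ hx) hc2E
        · exact Finset.mem_of_mem_erase h
      exact hMCB.1.2.1 E hEB hEne h0
  have hsp2 : SpansCycles G B2 := by
    intro c hc
    obtain ⟨E, hEB, hEsum⟩ := hMCB.1.2.2 c hc
    by_cases hc1E : c1 ∈ E
    · have hnotmem : c2 ∉ symmDiff E D := by
        intro h
        rcases Finset.mem_symmDiff.mp h with ⟨h1, _⟩ | ⟨h1, _⟩
        exacts [hc2B (hEB h1), hc2B (hDB h1)]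
      refine ⟨insert c2 (symmDiff E D), ?_, ?_⟩
      · intro x hx
        rcases Finset.mem_insert.mp hx with rfl | hx
        · exact Finset.mem_insert_self _ _
        · apply Finset.mem_insert_of_mem
          rcases Finset.mem_symmDiff.mp hx with ⟨h1, h2⟩ | ⟨h1, h2⟩
          · exact Finset.mem_erase.mpr ⟨fun he => h2 (he ▸ hc1D), hEB h1⟩
          · exact Finset.mem_erase.mpr ⟨fun he => h2 (he ▸ hc1E), hDB h1⟩
      · apply chi_inj
        rw [chi_cycleSum, Finset.sum_insert hnotmem, sum_chi_symmDiff, hchic2]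
        have hcE : chi c = ∑ c' ∈ E, chi c' := by rw [← chi_cycleSum, hEsum]
        rw [hcE]
        calc (∑ c ∈ D, chi c) + ((∑ c' ∈ E, chi c') + ∑ c ∈ D, chi c)
            = (∑ c' ∈ E, chi c') + ((∑ c ∈ D, chi c) + ∑ c ∈ D, chi c) := by ring
          _ = ∑ c' ∈ E, chi c' := by rw [add_self_w, add_zero]
    · refine ⟨E, ?_, hEsum⟩
      intro x hx
      apply Finset.mem_insert_of_mem
      exact Finset.mem_erase.mpr ⟨fun he => hc1E (he ▸ hx), hEB hx⟩
  have hle := hMCB.2 B2 ⟨hcyc2, hli2, hsp2⟩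
  have h1 : c1.card + ∑ c ∈ B.erase c1, c.card = weight B :=
    Finset.add_sum_erase B _ hc1B
  have h2 : weight B2 = c2.card + ∑ c ∈ B.erase c1, c.card :=
    Finset.sum_insert hc2ne
  unfold weight at *
  omega

lemma mcb_reverse {G : SimpleGraph V} {B : Finset (Finset (Sym2 V))}
    (hB : IsCycleBasis G B)
    (hloc : ∀ c1 ∈ B, ∀ c2 : Finset (Sym2 V), IsCycle G c2 → c2 ∉ B →
      lambdaEq1 B c1 c2 → c1.card ≤ c2.card)
    {B' : Finset (Finset (Sym2 V))} (hB' : IsCycleBasis G B') : weight B ≤ weight B' := by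
  classical
  have hliB := linearIndependent_chiF (V := V) hB.2.1
  have hliB' := linearIndependent_chiF (V := V) hB'.2.1
  have hspanle : ∀ {C C' : Finset (Finset (Sym2 V))}, (∀ c ∈ C', IsCycle G c) →
      SpansCycles G C →
      Submodule.span (ZMod 2) (Set.range (chiF C')) ≤
        Submodule.span (ZMod 2) (Set.range (chiF C)) := by
    intro C C' hcyc hsp
    rw [Submodule.span_le]
    rintro w ⟨i, rfl⟩
    obtain ⟨D, hD, hDsum⟩ := hsp i.1 (hcyc i.1 i.2)
    have hw : chiF C' i = ∑ c ∈ D, chi c := by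
      show chi i.1 = _
      rw [← hDsum, chi_cycleSum]
    rw [hw]
    exact Submodule.sum_mem _ (fun c hc => Submodule.subset_span ⟨⟨c, hD hc⟩, rfl⟩)
  have hspan_eq : Submodule.span (ZMod 2) (Set.range (chiF B')) =
      Submodule.span (ZMod 2) (Set.range (chiF B)) :=
    le_antisymm (hspanle hB'.1 hB.2.2) (hspanle hB.1 hB'.2.2)
  let 𝔅 : Module.Basis {x // x ∈ B} (ZMod 2) (Submodule.span (ZMod 2) (Set.range (chiF B))) :=
    Module.Basis.span hliB
  let 𝔅' : Module.Basis {x // x ∈ B'} (ZMod 2) (Submodule.span (ZMod 2) (Set.range (chiF B))) :=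
    (Module.Basis.span hliB').map (LinearEquiv.ofEq _ _ hspan_eq)
  let e : {x // x ∈ B} ≃ {x // x ∈ B'} := 𝔅.indexEquiv 𝔅'
  let N := 𝔅.toMatrix ⇑(𝔅'.reindex e.symm)
  haveI := 𝔅.invertibleToMatrix (𝔅'.reindex e.symm)
  have hdet : N.det ≠ 0 := (Matrix.isUnit_det_of_invertible N).ne_zero
  obtain ⟨σ, hσ⟩ := exists_perm_of_det_ne_zero N hdet
  have key : ∀ j : {x // x ∈ B}, lambdaEq1 B j.1 ((e (σ.symm j)).1) := by
    intro j
    set i := σ.symm j with hi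
    have hji : σ i = j := Equiv.apply_symm_apply σ j
    have hdcyc : IsCycle G (e i).1 := hB'.1 (e i).1 (e i).2
    obtain ⟨D, hD, hDsum⟩ := hB.2.2 (e i).1 hdcyc
    have hz : ((𝔅' (e i)) : Sym2 V → ZMod 2) = ∑ c ∈ D, chi c := by
      have h1 : ((𝔅' (e i)) : Sym2 V → ZMod 2) = chi (e i).1 := by
        show (((Module.Basis.span hliB').map (LinearEquiv.ofEq _ _ hspan_eq)) (e i) :
          Sym2 V → ZMod 2) = chi (e i).1
        rw [Module.Basis.map_apply, LinearEquiv.coe_ofEq_apply, Module.Basis.span_apply]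
        rfl
      rw [h1, ← hDsum, chi_cycleSum]
    have hrepr := repr_basisSpan hliB hD hz (σ i)
    have hN : N (σ i) i = 𝔅.repr (𝔅' (e i)) (σ i) := by
      show 𝔅.toMatrix ⇑(𝔅'.reindex e.symm) (σ i) i = _
      rw [Module.Basis.toMatrix_apply, Module.Basis.reindex_apply, Equiv.symm_symm]
    have hne := hσ i
    rw [hN, hrepr] at hne
    have hmem : (σ i).1 ∈ D := by
      by_contra h
      simp [h] at hne
    rw [hji] at hmem
    exact ⟨D, hD, hDsum, hmem⟩
  have hcard : ∀ j : {x // x ∈ B}, (j.1).card ≤ ((e (σ.symm j)).1).card := by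
    intro j
    have hdB' : (e (σ.symm j)).1 ∈ B' := (e (σ.symm j)).2
    have hdcyc : IsCycle G (e (σ.symm j)).1 := hB'.1 _ hdB'
    by_cases hdB : (e (σ.symm j)).1 ∈ B
    · obtain ⟨D, hD, hDsum, hjD⟩ := key j
      have hsing : cycleSum D = cycleSum {(e (σ.symm j)).1} := by
        rw [cycleSum_singleton, hDsum]
      have hDeq : D = {(e (σ.symm j)).1} :=
        linIndep_unique hB.2.1 hD (Finset.singleton_subset_iff.mpr hdB) hsing
      rw [hDeq] at hjD
      rw [Finset.mem_singleton.mp hjD]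
    · exact hloc j.1 j.2 _ hdcyc hdB (key j)
  calc weight B = ∑ j : {x // x ∈ B}, (j.1).card := (Finset.sum_coe_sort B _).symm
    _ ≤ ∑ j : {x // x ∈ B}, ((e (σ.symm j)).1).card :=
        Finset.sum_le_sum (fun j _ => hcard j)
    _ = ∑ i' : {x // x ∈ B'}, (i'.1).card :=
        Equiv.sum_comp (σ.symm.trans e) (fun i' : {x // x ∈ B'} => (i'.1).card)
    _ = weight B' := Finset.sum_coe_sort B' _

end Helpers

/-- A set `B` of cycles of `G` is a minimum cycle basis iff it is a cycle
basis and every `c₁ ∈ B` with `λ_B(c₁, c₂) = 1` for a cycle `c₂ ∉ B` satisfies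
`ω(c₁) ≤ ω(c₂)`. -/
theorem isMCB_iff_locally_minimal (G : SimpleGraph V) (B : Finset (Finset (Sym2 V)))
    (hBcyc : ∀ c ∈ B, IsCycle G c) :
    IsMCB G B ↔
      IsCycleBasis G B ∧
        ∀ c1 ∈ B, ∀ c2 : Finset (Sym2 V), IsCycle G c2 → c2 ∉ B →
          lambdaEq1 B c1 c2 → c1.card ≤ c2.card := by
  constructor
  · intro h
    exact ⟨h.1, mcb_forward h⟩
  · rintro ⟨hb, hloc⟩
    exact ⟨hb, fun B' hB' => mcb_reverse hb hloc hB'⟩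

end MCBI
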